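/- (Floquet, repeated root case) For Hill's equation with continuous real π-periodic Q, if ρ₁ = ρ₂ (= ±1), then Hill's equation has a nontrivial solution p with p(x+π) = ρ₁·p(x) for all x (i.e. a periodic solution of period π when ρ₁ = 1 and a solution of period 2π when ρ₁ = −1). -/

import Mathlib

open Real Set

/-- Uniqueness for Hill's equation: a solution with zero initial data vanishes. -/
private lemma hill_ode_zero (Q : ℝ → ℝ) (hQcont : Continuous Q) (lam : ℝ) (z : ℝ → ℝ)
    (hzd : Differentiable ℝ z) (hzd' : Differentiable ℝ (deriv z))
    (hz : ∀ x, deriv (deriv z) x + (lam + Q x) * z x = 0)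
    (h0 : z 0 = 0) (h0' : deriv z 0 = 0) : ∀ x, z x = 0 := by
  intro x
  set b : ℝ := |x| + 1 with hbdef
  have hb0 : 0 < b := by positivity
  obtain ⟨M₀, hM₀⟩ := (isCompact_Icc (a := -b) (b := b)).exists_bound_of_continuousOn
    ((continuous_const.add hQcont).continuousOn (s := Icc (-b) b)) (f := fun t => lam + Q t)
  set M : ℝ := max M₀ 0 with hMdef
  have hM0 : 0 ≤ M := le_max_right _ _
  have hMM : ∀ t ∈ Icc (-b) b, |lam + Q t| ≤ M := by
    intro t ht
    have := hM₀ t ht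
    rw [Real.norm_eq_abs] at this
    exact this.trans (le_max_left _ _)
  set c : ℝ → ℝ := fun t => lam + Q (max (-b) (min b t)) with hcdef
  have hclamp : ∀ t : ℝ, max (-b) (min b t) ∈ Icc (-b) b :=
    fun t => ⟨le_max_left _ _, max_le (by linarith) (min_le_left _ _)⟩
  have hcb : ∀ t, |c t| ≤ M := fun t => hMM _ (hclamp t)
  have hceq : ∀ t ∈ Icc (-b) b, c t = lam + Q t := by
    intro t ht
    simp only [hcdef]
    rw [min_eq_right ht.2, max_eq_right ht.1]
  set K : NNReal := ⟨M + 1, by positivity⟩ with hKdef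
  set v : ℝ → ℝ × ℝ → ℝ × ℝ := fun t u => (u.2, -(c t) * u.1) with hvdef
  have hlip : ∀ t, LipschitzWith K (v t) := by
    intro t
    apply LipschitzWith.of_dist_le_mul
    intro u w
    rw [Prod.dist_eq, Prod.dist_eq]
    have hK : (K : ℝ) = M + 1 := rfl
    rw [hK]
    have e2 : dist (-(c t) * u.1) (-(c t) * w.1) = |c t| * dist u.1 w.1 := by
      rw [Real.dist_eq, Real.dist_eq, ← mul_sub, abs_mul, abs_neg]
    have d1 : (0:ℝ) ≤ dist u.1 w.1 := dist_nonneg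
    have d2 : (0:ℝ) ≤ dist u.2 w.2 := dist_nonneg
    have l1 : dist u.1 w.1 ≤ max (dist u.1 w.1) (dist u.2 w.2) := le_max_left _ _
    have l2 : dist u.2 w.2 ≤ max (dist u.1 w.1) (dist u.2 w.2) := le_max_right _ _
    apply max_le
    · nlinarith
    · have hc1 := hcb t
      have habs : (0:ℝ) ≤ |c t| := abs_nonneg _
      rw [e2]
      nlinarith
  set f : ℝ → ℝ × ℝ := fun t => (z t, deriv z t) with hfdef
  have hODE := ODE_solution_unique_of_mem_Icc (v := v) (s := fun _ => univ) (K := K)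
    (f := f) (g := fun _ => ((0:ℝ), (0:ℝ))) (t₀ := 0) (a := -b) (b := b)
    (fun t _ => (hlip t).lipschitzOnWith)
    ⟨by linarith, by linarith⟩
    ((hzd.continuous.prodMk hzd'.continuous).continuousOn)
    (by
      intro t ht
      have h1 : HasDerivAt f (deriv z t, deriv (deriv z) t) t :=
        ((hzd t).hasDerivAt).prodMk ((hzd' t).hasDerivAt)
      have h2 : v t (f t) = (deriv z t, deriv (deriv z) t) := by
        simp only [hvdef, hfdef]
        have hct : c t = lam + Q t := hceq t ⟨le_of_lt ht.1, le_of_lt ht.2⟩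
        rw [hct]
        have h3 : deriv (deriv z) t = -(lam + Q t) * z t := by linarith [hz t]
        rw [h3]
      rw [h2]
      exact h1)
    (fun _ _ => mem_univ _)
    continuousOn_const
    (by
      intro t ht
      have h4 : v t ((0:ℝ), (0:ℝ)) = ((0:ℝ), (0:ℝ)) := by simp [hvdef]
      rw [h4]
      exact hasDerivAt_const t _)
    (fun _ _ => mem_univ _)
    (by simp [hfdef, h0, h0'])
  have hx : x ∈ Icc (-b) b :=
    ⟨by linarith [neg_abs_le x], by linarith [le_abs_self x]⟩
  have := hODE hx
  simpa [hfdef] using congrArg Prod.fst this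

/-- Floquet's theorem, repeated-root case: if the characteristic equation has a
repeated root `ρ₁ = ±1`, Hill's equation has a nontrivial solution `p` with
`p(x+π) = ρ₁ p(x)`. -/
theorem floquet_repeated (Q : ℝ → ℝ) (hQcont : Continuous Q)
    (hQper : ∀ x, Q (x + π) = Q x) (lam : ℝ) (y₁ y₂ : ℝ → ℝ)
    (hy₁d : Differentiable ℝ y₁) (hy₁d' : Differentiable ℝ (deriv y₁))
    (hy₂d : Differentiable ℝ y₂) (hy₂d' : Differentiable ℝ (deriv y₂))
    (hy₁ : ∀ x, deriv (deriv y₁) x + (lam + Q x) * y₁ x = 0)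
    (hy₂ : ∀ x, deriv (deriv y₂) x + (lam + Q x) * y₂ x = 0)
    (h10 : y₁ 0 = 1) (h10' : deriv y₁ 0 = 0)
    (h20 : y₂ 0 = 0) (h20' : deriv y₂ 0 = 1)
    (hdisc : (y₁ π + deriv y₂ π) ^ 2 = 4) :
    ∃ p : ℝ → ℝ, (∃ x, p x ≠ 0) ∧
      Differentiable ℝ p ∧ Differentiable ℝ (deriv p) ∧
      (∀ x, deriv (deriv p) x + (lam + Q x) * p x = 0) ∧
      (∀ x, p (x + π) = ((y₁ π + deriv y₂ π) / 2) * p x) := by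
  -- Any solution is the combination of y₁, y₂ given by its initial data.
  have repr : ∀ u : ℝ → ℝ, Differentiable ℝ u → Differentiable ℝ (deriv u) →
      (∀ x, deriv (deriv u) x + (lam + Q x) * u x = 0) →
      ∀ x, u x = u 0 * y₁ x + deriv u 0 * y₂ x := by
    intro u hud hud' hu x
    set A := u 0 with hA
    set B := deriv u 0 with hB
    set z : ℝ → ℝ := fun t => u t - A * y₁ t - B * y₂ t with hzdef
    have hzd : Differentiable ℝ z := (hud.sub (hy₁d.const_mul A)).sub (hy₂d.const_mul B)
    have hdz : deriv z = fun t => deriv u t - A * deriv y₁ t - B * deriv y₂ t := by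
      funext t
      simp only [hzdef]
      rw [deriv_fun_sub (f := fun y => u y - A * y₁ y) ((hud t).sub ((hy₁d t).const_mul A)) ((hy₂d t).const_mul B),
        deriv_fun_sub (hud t) ((hy₁d t).const_mul A),
        deriv_const_mul A (hy₁d t), deriv_const_mul B (hy₂d t)]
    have hzd' : Differentiable ℝ (deriv z) := by
      rw [hdz]
      exact (hud'.sub (hy₁d'.const_mul A)).sub (hy₂d'.const_mul B)
    have hddz : ∀ t, deriv (deriv z) t
        = deriv (deriv u) t - A * deriv (deriv y₁) t - B * deriv (deriv y₂) t := by
      intro t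
      rw [hdz]
      rw [deriv_fun_sub (f := fun y => deriv u y - A * deriv y₁ y) ((hud' t).sub ((hy₁d' t).const_mul A)) ((hy₂d' t).const_mul B),
        deriv_fun_sub (hud' t) ((hy₁d' t).const_mul A),
        deriv_const_mul A (hy₁d' t), deriv_const_mul B (hy₂d' t)]
    have hzODE : ∀ t, deriv (deriv z) t + (lam + Q t) * z t = 0 := by
      intro t
      rw [hddz t]
      simp only [hzdef]
      linear_combination (hu t) - A * (hy₁ t) - B * (hy₂ t)
    have hz0 : z 0 = 0 := by simp [hzdef, h10, h20, hA]
    have hz0' : deriv z 0 = 0 := by rw [hdz]; simp [h10', h20', hB]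
    have hz := hill_ode_zero Q hQcont lam z hzd hzd' hzODE hz0 hz0' x
    simp only [hzdef] at hz
    linarith
  -- translation identities
  have key : ∀ y : ℝ → ℝ, Differentiable ℝ y → Differentiable ℝ (deriv y) →
      (∀ x, deriv (deriv y) x + (lam + Q x) * y x = 0) →
      ∀ x, y (x + π) = y π * y₁ x + deriv y π * y₂ x := by
    intro y hyd hyd' hy x
    set u : ℝ → ℝ := fun t => y (t + π) with hudef
    have hud : Differentiable ℝ u := hyd.comp (differentiable_id.add_const π)
    have hdu : deriv u = fun t => deriv y (t + π) := funext fun t => deriv_comp_add_const y π t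
    have hud' : Differentiable ℝ (deriv u) := by
      rw [hdu]
      exact hyd'.comp (differentiable_id.add_const π)
    have hddu : ∀ t, deriv (deriv u) t = deriv (deriv y) (t + π) := by
      intro t
      rw [hdu]
      exact deriv_comp_add_const (deriv y) π t
    have huODE : ∀ t, deriv (deriv u) t + (lam + Q t) * u t = 0 := by
      intro t
      rw [hddu t]
      have h5 := hy (t + π)
      rw [hQper t] at h5
      simpa [hudef] using h5
    have h6 := repr u hud hud' huODE x
    simp only [hudef, hdu] at h6
    rw [zero_add] at h6
    rw [deriv_comp_add_const, zero_add] at h6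
    exact h6
  have t₁ := key y₁ hy₁d hy₁d' hy₁
  have t₂ := key y₂ hy₂d hy₂d' hy₂
  -- Wronskian is 1
  set W : ℝ → ℝ := fun t => y₁ t * deriv y₂ t - y₂ t * deriv y₁ t with hWdef
  have hWd : Differentiable ℝ W := (hy₁d.mul hy₂d').sub (hy₂d.mul hy₁d')
  have hW' : ∀ t, deriv W t = 0 := by
    intro t
    simp only [hWdef]
    rw [deriv_fun_sub (f := fun y => y₁ y * deriv y₂ y) (g := fun y => y₂ y * deriv y₁ y) ((hy₁d t).mul (hy₂d' t)) ((hy₂d t).mul (hy₁d' t)),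
      deriv_fun_mul (hy₁d t) (hy₂d' t), deriv_fun_mul (hy₂d t) (hy₁d' t)]
    linear_combination y₁ t * (hy₂ t) - y₂ t * (hy₁ t)
  have hdet : y₁ π * deriv y₂ π - y₂ π * deriv y₁ π = 1 := by
    have h7 := is_const_of_deriv_eq_zero hWd hW' π 0
    simp only [hWdef] at h7
    rw [h10, h10', h20, h20'] at h7
    linarith
  set a := y₁ π with ha
  set bb := y₂ π with hbb
  set cc := deriv y₁ π with hcc
  set d := deriv y₂ π with hd
  by_cases hcase : bb = 0 ∧ a = (a + d) / 2
  · -- degenerate case: p = y₂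
    have had : a = d := by have := hcase.2; linarith
    refine ⟨y₂, ?_, hy₂d, hy₂d', hy₂, ?_⟩
    · by_contra h
      push_neg at h
      have hfun : y₂ = fun _ => (0:ℝ) := funext h
      rw [hfun] at h20'
      simp at h20'
    · intro x
      rw [t₂ x]
      linear_combination y₁ x * hcase.1 - (y₂ x / 2) * had
  · have hcase' : ¬(bb = 0) ∨ ¬(a = (a + d) / 2) := by tauto
    set c₂ : ℝ := (a + d) / 2 - a with hc₂
    set p : ℝ → ℝ := fun t => bb * y₁ t + c₂ * y₂ t with hpdef
    have hpd : Differentiable ℝ p := (hy₁d.const_mul bb).add (hy₂d.const_mul c₂)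
    have hdp : deriv p = fun t => bb * deriv y₁ t + c₂ * deriv y₂ t := by
      funext t
      simp only [hpdef]
      rw [deriv_fun_add ((hy₁d t).const_mul bb) ((hy₂d t).const_mul c₂),
        deriv_const_mul bb (hy₁d t), deriv_const_mul c₂ (hy₂d t)]
    have hpd' : Differentiable ℝ (deriv p) := by
      rw [hdp]
      exact (hy₁d'.const_mul bb).add (hy₂d'.const_mul c₂)
    have hddp : ∀ t, deriv (deriv p) t
        = bb * deriv (deriv y₁) t + c₂ * deriv (deriv y₂) t := by
      intro t
      rw [hdp]
      rw [deriv_fun_add ((hy₁d' t).const_mul bb) ((hy₂d' t).const_mul c₂),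
        deriv_const_mul bb (hy₁d' t), deriv_const_mul c₂ (hy₂d' t)]
    refine ⟨p, ?_, hpd, hpd', ?_, ?_⟩
    · rcases hcase' with hb | hρ
      · refine ⟨0, ?_⟩
        simp only [hpdef]
        rw [h10, h20]
        simpa using hb
      · have hc₂0 : c₂ ≠ 0 := by
          simp only [hc₂]
          intro h
          exact hρ (by linarith)
        by_contra h
        push_neg at h
        have hfun : p = fun _ => (0:ℝ) := funext h
        have h8 : deriv p 0 = 0 := by rw [hfun]; simp
        rw [hdp] at h8
        simp only [h10', h20', mul_zero, mul_one, zero_add] at h8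
        exact hc₂0 h8
    · intro x
      rw [hddp x]
      simp only [hpdef]
      linear_combination bb * (hy₁ x) + c₂ * (hy₂ x)
    · intro x
      simp only [hpdef, hc₂]
      linear_combination bb * (t₁ x) + ((a + d) / 2 - a) * (t₂ x)
        - y₂ x * hdet + (y₂ x / 4) * hdisc
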